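/- For every real number t > 0, define V₉(t) = 7t(2 + 7t⁻³) if t⁻³ ≤ 10/49 and V₉(t) = 24t if t⁻³ ≥ 10/49. Then V₉(t) ∈ E(t), and every element e of E(t) with e ∉ {γ₁(t), γ₂(t), γ₃(t), γ₄(t), γ₅(t), γ₆(t), 8t, t(14 + t⁻³)} satisfies e ≥ V₉(t). -/
import Mathlib


/-- `γ_n(t) = t·n·(2 + n·t⁻³)` -/
noncomputable def gammaF (t : ℝ) (n : ℕ) : ℝ := t * n * (2 + n * (t ^ 3)⁻¹)

/-- `α_k(t) = t·(k(k+2) − 1 + t⁻³)` -/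
noncomputable def alphaF (t : ℝ) (k : ℕ) : ℝ := t * (k * (k + 2) - 1 + (t ^ 3)⁻¹)

/-- `β_l(t) = t·l·(l+2)` -/
noncomputable def betaF (t : ℝ) (l : ℕ) : ℝ := t * l * (l + 2)

/-- The set `E(t)` of nonzero eigenvalues of the unit-volume Berger sphere Laplacian. -/
def EV (t : ℝ) : Set ℝ :=
  {x | ∃ n : ℕ, 1 ≤ n ∧ x = gammaF t n} ∪
  {x | ∃ k : ℕ, Odd k ∧ 1 ≤ k ∧ x = alphaF t k} ∪
  {x | ∃ l : ℕ, Even l ∧ 2 ≤ l ∧ x = betaF t l}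

theorem berger_lambda9 (t : ℝ) (ht : 0 < t) :
    ∃ V : ℝ,
      ((t ^ 3)⁻¹ ≤ 10 / 49 → V = 7 * t * (2 + 7 * (t ^ 3)⁻¹)) ∧
      (10 / 49 ≤ (t ^ 3)⁻¹ → V = 24 * t) ∧
      V ∈ EV t ∧
      ∀ e ∈ EV t, e ∉ ({gammaF t 1, gammaF t 2, gammaF t 3, gammaF t 4, gammaF t 5, gammaF t 6, 8 * t, t * (14 + (t ^ 3)⁻¹)} : Set ℝ) → V ≤ e := by
  have hs0 : 0 < (t ^ 3)⁻¹ := by positivity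
  set s : ℝ := (t ^ 3)⁻¹ with hs
  refine ⟨min (t * (14 + 49 * s)) (24 * t), ?_, ?_, ?_, ?_⟩
  · intro h
    rw [min_eq_left (by nlinarith)]
    ring
  · intro h
    rw [min_eq_right (by nlinarith)]
  · rcases le_total s (10 / 49) with h | h
    · left; left
      refine ⟨7, by norm_num, ?_⟩
      rw [min_eq_left (by nlinarith)]
      simp only [gammaF]
      push_cast
      ring
    · right
      refine ⟨4, by decide, by norm_num, ?_⟩
      rw [min_eq_right (by nlinarith)]
      simp only [betaF]
      push_cast
      ring
  · rintro e ((⟨n, hn, rfl⟩ | ⟨k, hk, hk1, rfl⟩) | ⟨l, hl, hl2, rfl⟩) hne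
    · by_cases h7 : 7 ≤ n
      · have hn7 : (7 : ℝ) ≤ (n : ℝ) := by exact_mod_cast h7
        refine le_trans (min_le_left _ _) ?_
        simp only [gammaF]
        nlinarith [mul_pos ht hs0, sq_nonneg ((n : ℝ) - 7)]
      · exfalso
        interval_cases n <;> exact hne (by simp)
    · have hcase : k = 1 ∨ k = 3 ∨ 5 ≤ k := by
        rcases hk with ⟨m, rfl⟩; omega
      rcases hcase with rfl | rfl | hk5
      · exfalso
        apply hne
        have : alphaF t 1 = gammaF t 1 := by
          simp only [alphaF, gammaF]; push_cast; ring
        rw [this]; simp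
      · exfalso
        apply hne
        have : alphaF t 3 = t * (14 + s) := by
          simp only [alphaF]; push_cast; ring
        rw [this]; simp
      · have hk5' : (5 : ℝ) ≤ (k : ℝ) := by exact_mod_cast hk5
        refine le_trans (min_le_right _ _) ?_
        simp only [alphaF]
        have h1 : (24:ℝ) ≤ (k:ℝ) * ((k:ℝ) + 2) - 1 + (t ^ 3)⁻¹ := by nlinarith
        nlinarith [mul_le_mul_of_nonneg_left h1 ht.le]
    · have hcase : l = 2 ∨ 4 ≤ l := by
        rcases hl with ⟨m, rfl⟩; omega
      rcases hcase with rfl | hl4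
      · exfalso
        apply hne
        have : betaF t 2 = 8 * t := by
          simp only [betaF]; push_cast; ring
        rw [this]; simp
      · have hl4' : (4 : ℝ) ≤ (l : ℝ) := by exact_mod_cast hl4
        refine le_trans (min_le_right _ _) ?_
        simp only [betaF]
        have h1 : (24:ℝ) ≤ (l:ℝ) * ((l:ℝ) + 2) := by nlinarith
        calc 24 * t = t * 24 := by ring
          _ ≤ t * ((l:ℝ) * ((l:ℝ) + 2)) := by exact mul_le_mul_of_nonneg_left h1 ht.le
          _ = t * l * (l + 2) := by ring
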